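/- Let f = x⁴ + y⁴·x + y⁵ ∈ ℂ[x,y]. Then there exist no polynomials A, B ∈ ℂ[x,y] with A(0,0) = 0 and B(0,0) = 0 such that f = ∂(f·A)/∂x + ∂(f·B)/∂y. -/

import Mathlib

open MvPolynomial Finsupp

lemma coeff_pderiv' {R : Type*} [CommSemiring R] {σ : Type*} [DecidableEq σ] (i : σ)
    (p : MvPolynomial σ R) (m : σ →₀ ℕ) :
    coeff m (pderiv i p) = ((m i : R) + 1) * coeff (m + Finsupp.single i 1) p := by
  induction p using MvPolynomial.induction_on' with
  | monomial s a =>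
    rw [pderiv_monomial, coeff_monomial, coeff_monomial]
    by_cases h : s = m + Finsupp.single i 1
    · subst h
      rw [if_pos (add_tsub_cancel_right _ _), if_pos rfl]
      simp [mul_comm]
    · rw [if_neg h]
      by_cases h2 : s - Finsupp.single i 1 = m
      · have hsi : s i = 0 := by
          by_contra hs
          exact h (by rw [← h2, tsub_add_cancel_of_le
            (Finsupp.single_le_iff.mpr (Nat.one_le_iff_ne_zero.mpr hs))])
        rw [if_pos h2, hsi]
        simp
      · simp [h2]
  | add p q hp hq => simp [hp, hq, mul_add]

lemma coeff_monomial_mul₂ (p q r u : ℕ) (P : MvPolynomial (Fin 2) ℂ) :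
    coeff (Finsupp.single 0 p + Finsupp.single 1 q)
      (monomial (Finsupp.single 0 r + Finsupp.single 1 u) 1 * P)
    = if r ≤ p ∧ u ≤ q
      then coeff (Finsupp.single 0 (p - r) + Finsupp.single 1 (q - u)) P else 0 := by
  rw [coeff_monomial_mul']
  have hle : (Finsupp.single (0:Fin 2) r + Finsupp.single 1 u
      ≤ Finsupp.single 0 p + Finsupp.single 1 q) ↔ (r ≤ p ∧ u ≤ q) := by
    simp [Finsupp.le_def, Fin.forall_fin_two, Finsupp.single_apply]
  rw [if_congr hle rfl rfl]
  split_ifs with h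
  · rw [one_mul]
    congr 1
    ext j
    fin_cases j <;> simp [Finsupp.single_apply]
  · rfl

lemma coeff_pderiv₀ (p q : ℕ) (P : MvPolynomial (Fin 2) ℂ) :
    coeff (Finsupp.single 0 p + Finsupp.single 1 q) (pderiv 0 P)
      = ((p : ℂ) + 1) * coeff (Finsupp.single 0 (p + 1) + Finsupp.single 1 q) P := by
  rw [coeff_pderiv']
  congr 2
  · simp [Finsupp.single_apply]
  · ext j; fin_cases j <;> simp [Finsupp.single_apply]

lemma coeff_pderiv₁ (p q : ℕ) (P : MvPolynomial (Fin 2) ℂ) :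
    coeff (Finsupp.single 0 p + Finsupp.single 1 q) (pderiv 1 P)
      = ((q : ℂ) + 1) * coeff (Finsupp.single 0 p + Finsupp.single 1 (q + 1)) P := by
  rw [coeff_pderiv']
  congr 2
  · simp [Finsupp.single_apply]
  · ext j; fin_cases j <;> simp [Finsupp.single_apply]

theorem no_solution_euler_type_equation :
    ¬ ∃ A B : MvPolynomial (Fin 2) ℂ,
      eval (fun _ => (0 : ℂ)) A = 0 ∧ eval (fun _ => (0 : ℂ)) B = 0 ∧
      (X 0 ^ 4 + X 1 ^ 4 * X 0 + X 1 ^ 5 : MvPolynomial (Fin 2) ℂ)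
        = pderiv 0 ((X 0 ^ 4 + X 1 ^ 4 * X 0 + X 1 ^ 5) * A)
          + pderiv 1 ((X 0 ^ 4 + X 1 ^ 4 * X 0 + X 1 ^ 5) * B) := by
  rintro ⟨A, B, -, -, h⟩
  have hf : (X 0 ^ 4 + X 1 ^ 4 * X 0 + X 1 ^ 5 : MvPolynomial (Fin 2) ℂ)
      = monomial (Finsupp.single (0 : Fin 2) 4 + Finsupp.single 1 0) 1
      + monomial (Finsupp.single (0 : Fin 2) 1 + Finsupp.single 1 4) 1
      + monomial (Finsupp.single (0 : Fin 2) 0 + Finsupp.single 1 5) 1 := by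
    have k1 : (Finsupp.single (0 : Fin 2) 4 + Finsupp.single 1 0)
        = Finsupp.single (0 : Fin 2) 4 := by simp
    have k3 : (Finsupp.single (0 : Fin 2) 0 + Finsupp.single 1 5)
        = Finsupp.single (1 : Fin 2) 5 := by simp
    rw [k1, k3, add_comm (Finsupp.single (0 : Fin 2) 1), monomial_add_single, pow_one,
      ← X_pow_eq_monomial, ← X_pow_eq_monomial, ← X_pow_eq_monomial]
  rw [hf] at h
  simp only [add_mul] at h
  have key : ∀ p q : ℕ,
      coeff (Finsupp.single (0 : Fin 2) p + Finsupp.single 1 q)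
        (monomial (Finsupp.single (0 : Fin 2) 4 + Finsupp.single 1 0) (1:ℂ)
          + monomial (Finsupp.single (0 : Fin 2) 1 + Finsupp.single 1 4) 1
          + monomial (Finsupp.single (0 : Fin 2) 0 + Finsupp.single 1 5) 1)
      = coeff (Finsupp.single (0 : Fin 2) p + Finsupp.single 1 q)
        (pderiv 0 (monomial (Finsupp.single (0 : Fin 2) 4 + Finsupp.single 1 0) 1 * A
            + monomial (Finsupp.single (0 : Fin 2) 1 + Finsupp.single 1 4) 1 * A
            + monomial (Finsupp.single (0 : Fin 2) 0 + Finsupp.single 1 5) 1 * A)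
          + pderiv 1 (monomial (Finsupp.single (0 : Fin 2) 4 + Finsupp.single 1 0) 1 * B
            + monomial (Finsupp.single (0 : Fin 2) 1 + Finsupp.single 1 4) 1 * B
            + monomial (Finsupp.single (0 : Fin 2) 0 + Finsupp.single 1 5) 1 * B)) :=
    fun p q => congrArg _ h
  have e1 := key 4 0
  have e2 := key 3 1
  have e3 := key 2 3
  have e4 := key 1 4
  have e5 := key 0 5
  simp only [coeff_add, map_add, coeff_pderiv₀, coeff_pderiv₁, coeff_monomial_mul₂,
    coeff_monomial, Finsupp.ext_iff, Fin.forall_fin_two, Finsupp.add_apply,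
    Finsupp.single_apply] at e1 e2 e3 e4 e5
  norm_num at e1 e2 e3 e4 e5
  exact one_ne_zero (α := ℂ) (by linear_combination 7*e1 - 29*e4 + 23*e5 + 23*e2 - 145*e3)
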